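/- In the Decision-Rec Rob SP construction of Theorem 4: every path X ∈ Φ with first-stage cost ∑_{e∈X} C_e = 0 consists of the arcs (s_1,t_1), (t_1,s_2), (s_2,t_2) followed by a simple t_2–t'_2 subpath using only arcs of the 𝕏-variable gadgets; for each i ∈ [n] this subpath traverses exactly one of the two internally node-disjoint paths of the x_i gadget, and therefore uniquely determines a 0-1 assignment x of 𝕏 (x_i := 1 if the lower path is used, x_i := 0 if the upper path is used). -/

import Mathlib

namespace RRSP

/-- A simple directed `s`–`t` path in the digraph with arc set `A`, given as
the list of its (pairwise distinct) vertices. -/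
def IsPath {V : Type*} (A : Set (V × V)) (s t : V) (p : List V) : Prop :=
  List.Chain' (fun u v => (u, v) ∈ A) p ∧ p.head? = some s ∧ p.getLast? = some t ∧ p.Nodup

/-- The arc set of a path given by its vertex list. -/
def pathArcs {V : Type*} [DecidableEq V] (p : List V) : Finset (V × V) :=
  (p.zip p.tail).toFinset

/-- `Φ`: the set of all simple `s`–`t` paths, each identified with its arc set. -/
def Phi {V : Type*} [DecidableEq V] (A : Set (V × V)) (s t : V) : Set (Finset (V × V)) :=
  { X | ∃ p : List V, IsPath A s t p ∧ pathArcs p = X }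

/-- A CNF formula with `m` clauses over variables `Fin N`: clause `j` is a list
of literals.  An assignment satisfies the formula if every clause contains a
true literal. -/
def Satisfies {m N : ℕ} (F : Fin m → List (Fin N × Bool)) (a : Fin N → Bool) : Prop :=
  ∀ j, ∃ l ∈ F j, a l.1 = l.2

/-- Nodes of the variable–clause graph built from a CNF formula with `m`
clauses over `N` variables whose gadgets are chained:
`junction i` are the `N+1` junction nodes between consecutive gadgets
(`junction 0` is the entry of the first gadget, `junction N` the exit of the
last one), `upper i j` (resp. `lower i j`) is the internal node `v̄^{C_j}`
(resp. `v^{C_j}`) of the gadget of variable `i`, `cl1 j` and `cl2 j` are the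
clause nodes `C_j^{(1)}`, `C_j^{(2)}`, and `s1`, `t1` are the terminals of the
clause path. -/
inductive Node (N m : ℕ) where
  | junction : Fin (N + 1) → Node N m
  | upper : Fin N → Fin m → Node N m
  | lower : Fin N → Fin m → Node N m
  | cl1 : Fin m → Node N m
  | cl2 : Fin m → Node N m
  | s1 : Node N m
  | t1 : Node N m
deriving DecidableEq

variable {N m : ℕ}

/-- The `k`-th node on the upper path of the gadget of variable `i`
(`k = 0` is the entry junction, `k = m+1` the exit junction). -/
def upNode (i : Fin N) (k : Fin (m + 2)) : Node N m :=
  if h0 : k.val = 0 then .junction i.castSucc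
  else if h1 : k.val = m + 1 then .junction i.succ
  else .upper i ⟨k.val - 1, by have := k.isLt; omega⟩

/-- The `k`-th node on the lower path of the gadget of variable `i`. -/
def lowNode (i : Fin N) (k : Fin (m + 2)) : Node N m :=
  if h0 : k.val = 0 then .junction i.castSucc
  else if h1 : k.val = m + 1 then .junction i.succ
  else .lower i ⟨k.val - 1, by have := k.isLt; omega⟩

/-- The `m+1` arcs of the upper path of the gadget of variable `i`
(traversing it encodes assigning `i := 0`). -/
def upperArcs (i : Fin N) : Set (Node N m × Node N m) :=
  Set.range fun k : Fin (m + 1) => (upNode i k.castSucc, upNode i k.succ)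

/-- The `m+1` arcs of the lower path of the gadget of variable `i`
(traversing it encodes assigning `i := 1`). -/
def lowerArcs (i : Fin N) : Set (Node N m × Node N m) :=
  Set.range fun k : Fin (m + 1) => (lowNode i k.castSucc, lowNode i k.succ)

/-- All arcs of the variable gadgets. -/
def gadgetArcs : Set (Node N m × Node N m) := ⋃ i, upperArcs i ∪ lowerArcs i

/-- The literal arcs of clause `j`: for a positive literal `v` the arcs
`(C_j^{(1)}, v̄^{C_j})` and `(v̄^{C_j}, C_j^{(2)})`, for a negative literal `¬v`
the arcs `(C_j^{(1)}, v^{C_j})` and `(v^{C_j}, C_j^{(2)})`. -/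
def litArcs (F : Fin m → List (Fin N × Bool)) (j : Fin m) :
    Set (Node N m × Node N m) :=
  { e | ∃ l ∈ F j,
      (l.2 = true ∧ (e = (.cl1 j, .upper l.1 j) ∨ e = (.upper l.1 j, .cl2 j))) ∨
      (l.2 = false ∧ (e = (.cl1 j, .lower l.1 j) ∨ e = (.lower l.1 j, .cl2 j))) }

/-- The arcs `(s1, C_1^{(1)})`, `(C_m^{(2)}, t1)` and `(C_j^{(2)}, C_{j+1}^{(1)})`
chaining the clause nodes. -/
def chainArcs : Set (Node N m × Node N m) :=
  { e | (∃ h : 0 < m, e = (.s1, .cl1 ⟨0, h⟩)) ∨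
        (∃ h : 0 < m, e = (.cl2 ⟨m - 1, by omega⟩, .t1)) ∨
        (∃ j j' : Fin m, j'.val = j.val + 1 ∧ e = (.cl2 j, .cl1 j')) }

/-- The arcs of the variable–clause graph built from the formula `F`. -/
def baseArcs (F : Fin m → List (Fin N × Bool)) : Set (Node N m × Node N m) :=
  gadgetArcs ∪ (⋃ j, litArcs F j) ∪ chainArcs

/-- `s₂`: the entry of the first variable gadget. -/
def s2 : Node N m := .junction 0

/-- The arc set of the variable path encoding the assignment `a`: the lower
path of the gadget of `i` if `a i = 1`, its upper path if `a i = 0`. -/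
def assignArcs (a : Fin N → Bool) : Set (Node N m × Node N m) :=
  ⋃ i, if a i then lowerArcs i else upperArcs i

/-! Theorem 4 construction: the variables are `Fin (3*n)`, the first `n`
being `𝕐`, the next `n` being `ℤ` and the last `n` being `𝕏`; the `𝕐`- and
`ℤ`-gadgets are chained from `s₂ = junction 0` to `t₂ = junction (2*n)` and
the `𝕏`-gadgets from `t₂` to the new terminal `t₂' = junction (3*n)`. -/

/-- The index in `Fin (3*n)` of the variable `y_i`. -/
def yIdx3 (n : ℕ) (i : Fin n) : Fin (3 * n) := ⟨i.val, by have := i.isLt; omega⟩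

/-- The index in `Fin (3*n)` of the variable `x_i`. -/
def xIdx3 (n : ℕ) (i : Fin n) : Fin (3 * n) := ⟨2 * n + i.val, by have := i.isLt; omega⟩

/-- `t₂`: the junction between the `ℤ`-gadgets and the `𝕏`-gadgets. -/
def t2m (n m : ℕ) : Node (3 * n) m := .junction ⟨2 * n, by omega⟩

/-- `t₂'`: the exit of the last `𝕏`-gadget, the destination node. -/
def t2' (n m : ℕ) : Node (3 * n) m := .junction (Fin.last (3 * n))

/-- `e_{y_i}`: the distinguished arc of the lower path of the gadget of `y_i`. -/
def ey3 (n m : ℕ) (i : Fin n) : Node (3 * n) m × Node (3 * n) m :=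
  (lowNode (yIdx3 n i) (0 : Fin (m + 2)), lowNode (yIdx3 n i) (1 : Fin (m + 2)))

/-- The arcs of the Theorem 4 graph: the variable–clause graph completed with
the arcs `(s₁,t₁)`, `(t₁,s₂)` and `(s₂,t₂)`. -/
def arcsRob (n m : ℕ) (F : Fin m → List (Fin (3 * n) × Bool)) :
    Set (Node (3 * n) m × Node (3 * n) m) :=
  baseArcs F ∪ {((Node.s1 : Node (3 * n) m), Node.t1), (Node.t1, s2), (s2, t2m n m)}

open Classical in
/-- The first-stage costs: `C_e = 0` if `e ∈ {(s₁,t₁),(t₁,s₂),(s₂,t₂)}` or `e`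
is an arc of an `𝕏`-variable gadget, `C_e = 1` otherwise. -/
noncomputable def Cfs (n m : ℕ) : Node (3 * n) m × Node (3 * n) m → ℝ :=
  fun e => if e = ((Node.s1 : Node (3 * n) m), Node.t1) ∨ e = (Node.t1, s2) ∨
              e = (s2, t2m n m) ∨
              (∃ i : Fin n, e ∈ upperArcs (xIdx3 n i) ∪ lowerArcs (xIdx3 n i))
           then 0 else 1

open Classical in
/-- The nominal second-stage costs: `ĉ_e = 1` for `e ∈ {(s₁,t₁),(s₂,t₂)}`,
`ĉ_e = 0` otherwise. -/
noncomputable def chat3 (n m : ℕ) : Node (3 * n) m × Node (3 * n) m → ℝ :=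
  fun e => if e = ((Node.s1 : Node (3 * n) m), Node.t1) ∨ e = (s2, t2m n m)
           then 1 else 0

open Classical in
/-- The upper bounds on the second-stage costs: `c̄_e = 1` for
`e ∈ {(s₁,t₁),(s₂,t₂)} ∪ A_y`, `c̄_e = 0` otherwise. -/
noncomputable def cbar3 (n m : ℕ) : Node (3 * n) m × Node (3 * n) m → ℝ :=
  fun e => if e = ((Node.s1 : Node (3 * n) m), Node.t1) ∨ e = (s2, t2m n m) ∨
              (∃ i : Fin n, e = ey3 n m i) then 1 else 0

/-- `Û(Γ)`: extreme scenarios with at most `Γ` arcs at their upper bounds. -/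
def Uhat3 (n m Γ : ℕ) : Set ((Node (3 * n) m × Node (3 * n) m) → ℝ) :=
  { c | (∀ e, c e = chat3 n m e ∨ c e = cbar3 n m e) ∧
        { e | c e ≠ chat3 n m e }.ncard ≤ Γ }

section Helpers

/-- The zero-first-stage-cost arc relation. -/
def ZR (n m : ℕ) (u v : Node (3 * n) m) : Prop :=
  (u, v) = ((Node.s1 : Node (3 * n) m), Node.t1) ∨ (u, v) = ((Node.t1 : Node (3 * n) m), s2) ∨
  (u, v) = (s2, t2m n m) ∨
  ∃ i : Fin n, (u, v) ∈ upperArcs (xIdx3 n i) ∪ lowerArcs (xIdx3 n i)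

/-- The `j`-th internal node of branch `b` of gadget `w`. -/
def gN {N m : ℕ} (w : Fin N) (b : Bool) (j : Fin m) : Node N m :=
  if b then .lower w j else .upper w j

/-- The `k`-th arc of branch `b` of gadget `w`. -/
def gArc {N m : ℕ} (w : Fin N) (b : Bool) (k : Fin (m + 1)) : Node N m × Node N m :=
  if b then (lowNode w k.castSucc, lowNode w k.succ)
  else (upNode w k.castSucc, upNode w k.succ)

/-- The arc set of branch `b` of gadget `w`. -/
def gA {N m : ℕ} (w : Fin N) (b : Bool) : Set (Node N m × Node N m) :=
  if b then lowerArcs w else upperArcs w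

lemma gA_eq_range {N m : ℕ} (w : Fin N) (b : Bool) :
    gA (m := m) w b = Set.range (gArc w b) := by
  cases b <;> rfl

lemma upNode_zero {N m : ℕ} (w : Fin N) (h : (0:ℕ) < m + 2) :
    upNode (m := m) w ⟨0, h⟩ = .junction w.castSucc := by
  simp [upNode]

lemma lowNode_zero {N m : ℕ} (w : Fin N) (h : (0:ℕ) < m + 2) :
    lowNode (m := m) w ⟨0, h⟩ = .junction w.castSucc := by
  simp [lowNode]

lemma upNode_top {N m : ℕ} (w : Fin N) (h : m + 1 < m + 2) :
    upNode (m := m) w ⟨m + 1, h⟩ = .junction w.succ := by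
  rw [upNode, dif_neg (show ¬(m + 1 = 0) by omega), dif_pos rfl]

lemma lowNode_top {N m : ℕ} (w : Fin N) (h : m + 1 < m + 2) :
    lowNode (m := m) w ⟨m + 1, h⟩ = .junction w.succ := by
  rw [lowNode, dif_neg (show ¬(m + 1 = 0) by omega), dif_pos rfl]

lemma upNode_mid {N m : ℕ} (w : Fin N) (v : ℕ) (hv : v < m + 2) (h1 : 0 < v) (h2 : v < m + 1) :
    upNode (m := m) w ⟨v, hv⟩ = .upper w ⟨v - 1, by omega⟩ := by
  rw [upNode, dif_neg (show ¬(v = 0) by omega), dif_neg (show ¬(v = m + 1) by omega)]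

lemma lowNode_mid {N m : ℕ} (w : Fin N) (v : ℕ) (hv : v < m + 2) (h1 : 0 < v) (h2 : v < m + 1) :
    lowNode (m := m) w ⟨v, hv⟩ = .lower w ⟨v - 1, by omega⟩ := by
  rw [lowNode, dif_neg (show ¬(v = 0) by omega), dif_neg (show ¬(v = m + 1) by omega)]

lemma castSucc_mk {q : ℕ} (v : ℕ) (h : v < q + 1) :
    Fin.castSucc (⟨v, h⟩ : Fin (q + 1)) = (⟨v, by omega⟩ : Fin (q + 2)) := rfl

lemma succ_mk {q : ℕ} (v : ℕ) (h : v < q + 1) :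
    Fin.succ (⟨v, h⟩ : Fin (q + 1)) = (⟨v + 1, by omega⟩ : Fin (q + 2)) := rfl

lemma gArc_zero {N m : ℕ} (hm : 0 < m) (w : Fin N) (b : Bool) :
    gArc w b ⟨0, by omega⟩ = (.junction w.castSucc, gN w b ⟨0, hm⟩) := by
  cases b
  · show (upNode w _, upNode w _) = _
    rw [castSucc_mk, succ_mk, upNode_zero, upNode_mid w 1 (by omega) (by omega) (by omega)]
    rfl
  · show (lowNode w _, lowNode w _) = _
    rw [castSucc_mk, succ_mk, lowNode_zero, lowNode_mid w 1 (by omega) (by omega) (by omega)]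
    rfl

lemma gArc_mid {N m : ℕ} (w : Fin N) (b : Bool) (c : ℕ) (hc : c + 1 < m) :
    gArc w b ⟨c + 1, by omega⟩ = (gN w b ⟨c, by omega⟩, gN w b ⟨c + 1, hc⟩) := by
  cases b
  · show (upNode w _, upNode w _) = _
    rw [castSucc_mk, succ_mk, upNode_mid w (c+1) (by omega) (by omega) (by omega),
      upNode_mid w (c+2) (by omega) (by omega) (by omega)]
    show (Node.upper w ⟨c + 1 - 1, _⟩, Node.upper w ⟨c + 2 - 1, _⟩) = _
    simp [gN]
  · show (lowNode w _, lowNode w _) = _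
    rw [castSucc_mk, succ_mk, lowNode_mid w (c+1) (by omega) (by omega) (by omega),
      lowNode_mid w (c+2) (by omega) (by omega) (by omega)]
    show (Node.lower w ⟨c + 1 - 1, _⟩, Node.lower w ⟨c + 2 - 1, _⟩) = _
    simp [gN]

lemma gArc_last {N m : ℕ} (hm : 0 < m) (w : Fin N) (b : Bool) :
    gArc w b (⟨m, by omega⟩ : Fin (m + 1)) = (gN w b (⟨m - 1, by omega⟩ : Fin m), .junction w.succ) := by
  cases b
  · show (upNode w _, upNode w _) = _
    rw [castSucc_mk, succ_mk, upNode_top, upNode_mid w m (by omega) (by omega) (by omega)]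
    rfl
  · show (lowNode w _, lowNode w _) = _
    rw [castSucc_mk, succ_mk, lowNode_top, lowNode_mid w m (by omega) (by omega) (by omega)]
    rfl

end Helpers

section Helpers2

@[simp] lemma gN_inj {N m : ℕ} {w w' : Fin N} {b b' : Bool} {j j' : Fin m} :
    gN w b j = gN w' b' j' ↔ w = w' ∧ b = b' ∧ j = j' := by
  cases b <;> cases b' <;> simp [gN]

@[simp] lemma gN_ne_junction {N m : ℕ} {w : Fin N} {b : Bool} {j : Fin m} {x : Fin (N+1)} :
    gN w b j ≠ Node.junction x := by cases b <;> simp [gN]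

@[simp] lemma junction_ne_gN {N m : ℕ} {w : Fin N} {b : Bool} {j : Fin m} {x : Fin (N+1)} :
    Node.junction x ≠ gN w b j := by cases b <;> simp [gN]

@[simp] lemma gN_ne_s1 {N m : ℕ} {w : Fin N} {b : Bool} {j : Fin m} :
    gN w b j ≠ Node.s1 := by cases b <;> simp [gN]

@[simp] lemma gN_ne_t1 {N m : ℕ} {w : Fin N} {b : Bool} {j : Fin m} :
    gN w b j ≠ Node.t1 := by cases b <;> simp [gN]

@[simp] lemma s1_ne_gN {N m : ℕ} {w : Fin N} {b : Bool} {j : Fin m} :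
    Node.s1 ≠ gN w b j := by cases b <;> simp [gN]

@[simp] lemma t1_ne_gN {N m : ℕ} {w : Fin N} {b : Bool} {j : Fin m} :
    Node.t1 ≠ gN w b j := by cases b <;> simp [gN]

lemma gA_cases {N m : ℕ} (hm : 0 < m) {w : Fin N} {b : Bool}
    {e : Node N m × Node N m} (he : e ∈ gA w b) :
    e = (.junction w.castSucc, gN w b ⟨0, hm⟩) ∨
    (∃ c, ∃ hc : c + 1 < m, e = (gN w b ⟨c, by omega⟩, gN w b ⟨c + 1, hc⟩)) ∨
    e = (gN w b (⟨m - 1, by omega⟩ : Fin m), .junction w.succ) := by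
  rw [gA_eq_range] at he
  obtain ⟨⟨kv, hkv⟩, hk⟩ := he
  match kv with
  | 0 =>
    rw [gArc_zero hm] at hk
    exact Or.inl hk.symm
  | (c+1) =>
    by_cases hcm : c + 1 = m
    · subst hcm
      rw [gArc_last (by omega) w b] at hk
      right; right
      exact hk.symm
    · rw [gArc_mid w b c (by omega)] at hk
      exact Or.inr (Or.inl ⟨c, by omega, hk.symm⟩)

lemma ZR_cases {n m : ℕ} (hm : 0 < m) {u v : Node (3 * n) m} (h : ZR n m u v) :
    (u = .s1 ∧ v = .t1) ∨ (u = .t1 ∧ v = s2) ∨ (u = s2 ∧ v = t2m n m) ∨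
    ∃ i : Fin n, ∃ b : Bool,
      ((u = .junction (xIdx3 n i).castSucc ∧ v = gN (xIdx3 n i) b ⟨0, hm⟩) ∨
       (∃ c, ∃ hc : c + 1 < m,
          u = gN (xIdx3 n i) b ⟨c, by omega⟩ ∧ v = gN (xIdx3 n i) b ⟨c + 1, hc⟩) ∨
       (u = gN (xIdx3 n i) b (⟨m - 1, by omega⟩ : Fin m) ∧
          v = .junction (xIdx3 n i).succ)) := by
  rcases h with h | h | h | ⟨i, hi⟩
  · exact Or.inl (by simpa [Prod.ext_iff] using h)
  · exact Or.inr (Or.inl (by simpa [Prod.ext_iff] using h))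
  · exact Or.inr (Or.inr (Or.inl (by simpa [Prod.ext_iff] using h)))
  · right; right; right
    refine ⟨i, ?_⟩
    have : (u, v) ∈ gA (xIdx3 n i) false ∨ (u, v) ∈ gA (xIdx3 n i) true := hi
    rcases this with h' | h'
    · exact ⟨false, by simpa [Prod.ext_iff] using gA_cases hm h'⟩
    · exact ⟨true, by simpa [Prod.ext_iff] using gA_cases hm h'⟩

lemma step_s1 {n m : ℕ} (hm : 0 < m) {v : Node (3 * n) m} (h : ZR n m Node.s1 v) :
    v = Node.t1 := by
  rcases ZR_cases hm h with ⟨_, rfl⟩ | ⟨h1, _⟩ | ⟨h1, _⟩ | ⟨i, b, ⟨h1, _⟩ | ⟨c, hc, h1, _⟩ | ⟨h1, _⟩⟩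
  · rfl
  all_goals simp [s2] at h1

lemma step_t1 {n m : ℕ} (hm : 0 < m) {v : Node (3 * n) m} (h : ZR n m Node.t1 v) :
    v = s2 := by
  rcases ZR_cases hm h with ⟨h1, _⟩ | ⟨_, rfl⟩ | ⟨h1, _⟩ | ⟨i, b, ⟨h1, _⟩ | ⟨c, hc, h1, _⟩ | ⟨h1, _⟩⟩
  · simp at h1
  · rfl
  all_goals simp [s2] at h1

lemma step_junction {n m : ℕ} (hm : 0 < m) {j : Fin (3 * n + 1)} {v : Node (3 * n) m}
    (h : ZR n m (Node.junction j) v) :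
    (j.val = 0 ∧ v = t2m n m) ∨
    ∃ i : Fin n, ∃ b : Bool, j.val = 2 * n + i.val ∧ v = gN (xIdx3 n i) b ⟨0, hm⟩ := by
  rcases ZR_cases hm h with ⟨h1, _⟩ | ⟨h1, _⟩ | ⟨h1, rfl⟩ | ⟨i, b, ⟨h1, rfl⟩ | ⟨c, hc, h1, _⟩ | ⟨h1, _⟩⟩
  · simp at h1
  · simp at h1
  · left
    refine ⟨?_, rfl⟩
    simp only [s2, Node.junction.injEq] at h1
    rw [h1]; rfl
  · right
    refine ⟨i, b, ?_, rfl⟩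
    simp only [Node.junction.injEq] at h1
    rw [h1]; rfl
  · exact absurd h1 (by simp)
  · exact absurd h1 (by simp)

lemma step_gN {n m : ℕ} (hm : 0 < m) {w : Fin (3 * n)} {b : Bool} {j : Fin m}
    {v : Node (3 * n) m} (h : ZR n m (gN w b j) v) :
    (∃ hj : j.val + 1 < m, v = gN w b ⟨j.val + 1, hj⟩) ∨
    (j.val + 1 = m ∧ v = Node.junction w.succ) := by
  rcases ZR_cases hm h with ⟨h1, _⟩ | ⟨h1, _⟩ | ⟨h1, _⟩ | ⟨i, b', ⟨h1, _⟩ | ⟨c, hc, h1, rfl⟩ | ⟨h1, rfl⟩⟩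
  · simp at h1
  · simp at h1
  · simp [s2] at h1
  · simp at h1
  · left
    obtain ⟨hw, hb, hj⟩ := gN_inj.1 h1
    subst hw hb
    have hjv : j.val = c := by rw [hj]
    refine ⟨by omega, ?_⟩
    congr 1
    exact Fin.ext (by simp [hjv])
  · right
    obtain ⟨hw, hb, hj⟩ := gN_inj.1 h1
    subst hw hb
    have hjv : j.val = m - 1 := by rw [hj]
    exact ⟨by omega, rfl⟩

end Helpers2

section Helpers3

lemma chain'_of_zip {α : Type*} {B : α → α → Prop} :
    ∀ {l : List α}, (∀ a b, (a, b) ∈ l.zip l.tail → B a b) → l.Chain' B := by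
  intro l
  induction l with
  | nil => exact fun _ => List.isChain_nil
  | cons a t ih =>
    cases t with
    | nil => exact fun _ => List.isChain_singleton a
    | cons b t' =>
      intro h
      rw [List.Chain', List.isChain_cons_cons]
      refine ⟨h a b (by simp), ih fun x y hxy => h x y ?_⟩
      exact List.mem_cons_of_mem _ hxy

lemma pathArcs_singleton {V : Type*} [DecidableEq V] (u : V) : pathArcs [u] = ∅ := rfl

lemma pathArcs_cons {V : Type*} [DecidableEq V] (u v : V) (t : List V) :
    pathArcs (u :: v :: t) = insert (u, v) (pathArcs (v :: t)) := by
  simp [pathArcs]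

/-- The arcs of branch `b` of gadget `w` from position `k` on. -/
def gTail {N m : ℕ} (w : Fin N) (b : Bool) (k : ℕ) : Set (Node N m × Node N m) :=
  {e | ∃ k' : Fin (m + 1), k ≤ k'.val ∧ e = gArc w b k'}

lemma gTail_zero {N m : ℕ} (w : Fin N) (b : Bool) : gTail (m := m) w b 0 = gA w b := by
  rw [gA_eq_range]
  ext e
  simp [gTail, eq_comm]

lemma gTail_top {N m : ℕ} (w : Fin N) (b : Bool) : gTail (m := m) w b (m + 1) = ∅ := by
  ext e
  simp only [gTail, Set.mem_setOf_eq, Set.mem_empty_iff_false, iff_false, not_exists]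
  intro k hk
  have := k.isLt
  omega

lemma gTail_succ {N m : ℕ} (w : Fin N) (b : Bool) (k : ℕ) (hk : k ≤ m) :
    gTail (m := m) w b k = insert (gArc w b ⟨k, by omega⟩) (gTail w b (k + 1)) := by
  ext e
  simp only [gTail, Set.mem_insert_iff, Set.mem_setOf_eq]
  constructor
  · rintro ⟨k', hk', rfl⟩
    by_cases h : k'.val = k
    · left; congr 1; exact Fin.ext (by simp [h])
    · right; exact ⟨k', by omega, rfl⟩
  · rintro (rfl | ⟨k', hk', rfl⟩)
    · exact ⟨⟨k, by omega⟩, le_refl _, rfl⟩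
    · exact ⟨k', by omega, rfl⟩

lemma Cfs_nonneg {n m : ℕ} (e : Node (3 * n) m × Node (3 * n) m) : 0 ≤ Cfs n m e := by
  unfold Cfs
  split <;> norm_num

lemma ZR_of_Cfs_eq_zero {n m : ℕ} {u v : Node (3 * n) m}
    (h : Cfs n m (u, v) = 0) : ZR n m u v := by
  unfold Cfs at h
  split at h
  · assumption
  · norm_num at h

end Helpers3

section Walk

lemma walk_gadget {n m : ℕ} (hn : 0 < n) (hm : 0 < m) :
    ∀ (d : ℕ) (w : Fin (3 * n)) (b : Bool) (k : ℕ) (hk : k < m), m = k + 1 + d →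
    ∀ (q : List (Node (3 * n) m)),
      q.Chain' (ZR n m) → q.head? = some (gN w b ⟨k, hk⟩) →
      q.getLast? = some (t2' n m) →
      ∃ q' : List (Node (3 * n) m), q'.Chain' (ZR n m) ∧
        q'.head? = some (.junction w.succ) ∧ q'.getLast? = some (t2' n m) ∧
        (↑(pathArcs q) : Set (Node (3 * n) m × Node (3 * n) m)) =
          gTail w b (k + 1) ∪ ↑(pathArcs q') := by
  intro d
  induction d with
  | zero =>
    intro w b k hk hd q hchain hhead hlast
    cases q with
    | nil => simp at hhead
    | cons u rest =>
      simp only [List.head?_cons, Option.some.injEq] at hhead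
      subst hhead
      cases rest with
      | nil =>
        simp only [List.getLast?_singleton, Option.some.injEq, t2'] at hlast
        exact absurd hlast (by simp)
      | cons v rest' =>
        rw [List.Chain', List.isChain_cons_cons] at hchain
        obtain ⟨huv, hchain'⟩ := hchain
        rw [List.getLast?_cons_cons] at hlast
        rcases step_gN hm huv with ⟨hj, rfl⟩ | ⟨hj, rfl⟩
        · have hj' : k + 1 < m := hj
          omega
        · refine ⟨Node.junction w.succ :: rest', hchain', rfl, hlast, ?_⟩
          rw [pathArcs_cons, Finset.coe_insert]
          have hk1 : k + 1 = m := by omega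
          have hfin : (⟨k, hk⟩ : Fin m) = ⟨m - 1, by omega⟩ := Fin.ext (by simp; omega)
          rw [hk1, gTail_succ w b m (le_refl m), gTail_top, gArc_last hm w b,
            Set.insert_union, Set.empty_union, hfin]
  | succ d ih =>
    intro w b k hk hd q hchain hhead hlast
    cases q with
    | nil => simp at hhead
    | cons u rest =>
      simp only [List.head?_cons, Option.some.injEq] at hhead
      subst hhead
      cases rest with
      | nil =>
        simp only [List.getLast?_singleton, Option.some.injEq, t2'] at hlast
        exact absurd hlast (by simp)
      | cons v rest' =>
        rw [List.Chain', List.isChain_cons_cons] at hchain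
        obtain ⟨huv, hchain'⟩ := hchain
        rw [List.getLast?_cons_cons] at hlast
        rcases step_gN hm huv with ⟨hj, rfl⟩ | ⟨hj, rfl⟩
        · have hj' : k + 1 < m := hj
          obtain ⟨q', hq'c, hq'h, hq'l, hq'a⟩ :=
            ih w b (k + 1) hj' (by omega) (gN w b ⟨↑(⟨k, hk⟩ : Fin m) + 1, hj⟩ :: rest')
              (by exact hchain') (by rfl) hlast
          refine ⟨q', hq'c, hq'h, hq'l, ?_⟩
          rw [pathArcs_cons, Finset.coe_insert, hq'a,
            gTail_succ w b (k + 1) (by omega), gArc_mid w b k hj', Set.insert_union]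
        · have hj' : k + 1 = m := hj
          omega

end Walk

section WalkJ

lemma xIdx3_castSucc {n : ℕ} (i : Fin n) :
    ((xIdx3 n i).castSucc : Fin (3 * n + 1)).val = 2 * n + i.val := rfl

lemma xIdx3_succ {n : ℕ} (i : Fin n) :
    ((xIdx3 n i).succ : Fin (3 * n + 1)).val = 2 * n + i.val + 1 := rfl

lemma walk_junction {n m : ℕ} (hn : 0 < n) (hm : 0 < m) :
    ∀ (d j : ℕ) (hj : j ≤ n), n = j + d →
    ∀ (q : List (Node (3 * n) m)),
      q.Chain' (ZR n m) → q.head? = some (.junction ⟨2 * n + j, by omega⟩) →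
      q.getLast? = some (t2' n m) →
      ∃ x : Fin n → Bool,
        (↑(pathArcs q) : Set (Node (3 * n) m × Node (3 * n) m)) =
          ⋃ i : Fin n, {e | j ≤ i.val ∧ e ∈ gA (xIdx3 n i) (x i)} := by
  intro d
  induction d with
  | zero =>
    intro j hj hd q hchain hhead hlast
    have hjn : j = n := by omega
    subst hjn
    cases q with
    | nil => simp at hhead
    | cons u rest =>
      simp only [List.head?_cons, Option.some.injEq] at hhead
      subst hhead
      cases rest with
      | nil =>
        refine ⟨fun _ => false, ?_⟩
        rw [pathArcs_singleton]
        ext e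
        simp only [Finset.coe_empty, Set.mem_empty_iff_false, Set.mem_iUnion,
          Set.mem_setOf_eq, false_iff, not_exists]
        intro i ⟨h1, _⟩
        have := i.isLt
        omega
      | cons v rest' =>
        rw [List.Chain', List.isChain_cons_cons] at hchain
        rcases step_junction hm hchain.1 with ⟨h0, _⟩ | ⟨i, b, hval, _⟩
        · simp at h0; omega
        · simp at hval
          have := i.isLt
          omega
  | succ d ih =>
    intro j hj hd q hchain hhead hlast
    cases q with
    | nil => simp at hhead
    | cons u rest =>
      simp only [List.head?_cons, Option.some.injEq] at hhead
      subst hhead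
      cases rest with
      | nil =>
        simp only [List.getLast?_singleton, Option.some.injEq, t2',
          Node.junction.injEq] at hlast
        have : 2 * n + j = 3 * n := congrArg Fin.val hlast
        omega
      | cons v rest' =>
        rw [List.Chain', List.isChain_cons_cons] at hchain
        obtain ⟨huv, hchain'⟩ := hchain
        rw [List.getLast?_cons_cons] at hlast
        rcases step_junction hm huv with ⟨h0, _⟩ | ⟨i, b, hval, rfl⟩
        · simp at h0; omega
        · simp only [Fin.val_mk] at hval
          have hij : i.val = j := by omega
          obtain ⟨q', hq'c, hq'h, hq'l, hq'a⟩ :=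
            walk_gadget hn hm (m - 1) (xIdx3 n i) b 0 hm (by omega)
              (gN (xIdx3 n i) b ⟨0, hm⟩ :: rest') hchain' (by rfl) hlast
          have hsucc : (Node.junction (xIdx3 n i).succ : Node (3 * n) m) =
              .junction ⟨2 * n + (j + 1), by omega⟩ := by
            congr 1
            exact Fin.ext (show 2*n+i.val+1 = 2*n+(j+1) by omega)
          rw [hsucc] at hq'h
          obtain ⟨x, hx⟩ := ih (j + 1) (by omega) (by omega) q' hq'c hq'h hq'l
          refine ⟨Function.update x i b, ?_⟩
          rw [pathArcs_cons, Finset.coe_insert, hq'a, hx]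
          have hu : (Node.junction (⟨2 * n + j, by omega⟩ : Fin (3 * n + 1)) : Node (3 * n) m) =
              .junction (xIdx3 n i).castSucc := by
            congr 1
            exact Fin.ext (show 2*n+j = 2*n+i.val by omega)
          rw [hu]
          have harc : ((Node.junction (xIdx3 n i).castSucc : Node (3 * n) m),
              gN (xIdx3 n i) b ⟨0, hm⟩) = gArc (xIdx3 n i) b ⟨0, by omega⟩ :=
            (gArc_zero hm _ b).symm
          rw [harc, ← Set.insert_union, ← gTail_succ (xIdx3 n i) b 0 (by omega), gTail_zero]
          ext e
          simp only [Set.mem_union, Set.mem_iUnion, Set.mem_setOf_eq]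
          constructor
          · rintro (he | ⟨i', hi', he⟩)
            · exact ⟨i, by omega, by rw [Function.update_self]; exact he⟩
            · refine ⟨i', by omega, ?_⟩
              rw [Function.update_of_ne (fun hc => by subst hc; omega)]
              exact he
          · rintro ⟨i', hji', he⟩
            by_cases hii : i' = i
            · subst hii
              rw [Function.update_self] at he
              exact Or.inl he
            · right
              refine ⟨i', ?_, ?_⟩
              · have : i'.val ≠ j := fun hc => hii (Fin.ext (by omega))
                omega
              · rw [Function.update_of_ne hii] at he
                exact he

end WalkJ

section Uniq

def RHSset (n m : ℕ) (z : Fin n → Bool) : Set (Node (3 * n) m × Node (3 * n) m) :=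
  {((Node.s1 : Node (3 * n) m), Node.t1), (Node.t1, s2), (s2, t2m n m)} ∪
  ⋃ i : Fin n, (if z i then lowerArcs (xIdx3 n i) else upperArcs (xIdx3 n i))

lemma gA_def {N m : ℕ} (w : Fin N) (c : Bool) :
    (if c then lowerArcs (m := m) w else upperArcs w) = gA w c := rfl

lemma xIdx3_inj {n : ℕ} {i i' : Fin n} (h : xIdx3 n i = xIdx3 n i') : i = i' := by
  simp only [xIdx3, Fin.mk.injEq] at h
  exact Fin.ext (by omega)

lemma testArc_mem {n m : ℕ} (hn : 0 < n) (hm : 0 < m) (z : Fin n → Bool) (i : Fin n) :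
    gArc (xIdx3 n i) true (⟨0, by omega⟩ : Fin (m + 1)) ∈ RHSset n m z ↔ z i = true := by
  rw [gArc_zero hm]
  constructor
  · intro h
    simp only [RHSset, Set.mem_union, Set.mem_insert_iff, Set.mem_singleton_iff,
      Set.mem_iUnion] at h
    rcases h with (h | h | h) | ⟨i', he⟩
    · simp [Prod.ext_iff] at h
    · simp [Prod.ext_iff] at h
    · simp [Prod.ext_iff, t2m, s2] at h
    · rw [gA_def] at he
      rcases gA_cases hm he with h | ⟨c, hc, h⟩ | h
      · rw [Prod.mk.injEq] at h
        obtain ⟨hw, hb, _⟩ := gN_inj.1 h.2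
        rw [xIdx3_inj hw, ← hb]
      · rw [Prod.mk.injEq] at h
        exact absurd h.1 (by simp)
      · rw [Prod.mk.injEq] at h
        exact absurd h.2 (by simp)
  · intro h
    right
    rw [Set.mem_iUnion]
    exact ⟨i, by rw [h, if_pos rfl]; exact ⟨⟨0, by omega⟩, gArc_zero hm _ true⟩⟩

lemma RHS_inj {n m : ℕ} (hn : 0 < n) (hm : 0 < m) {y z : Fin n → Bool}
    (h : RHSset n m y = RHSset n m z) : y = z := by
  funext i
  have h1 := testArc_mem hn hm y i
  have h2 := testArc_mem hn hm z i
  rw [h] at h1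
  have hiff := h1.symm.trans h2
  cases hyi : y i <;> cases hzi : z i <;> simp [hyi, hzi] at hiff ⊢

end Uniq


/-- structure of zero-first-stage-cost paths in the
Theorem 4 construction.  Every path `X ∈ Φ` with first-stage cost
`∑_{e ∈ X} C_e = 0` consists of the arcs `(s₁,t₁)`, `(t₁,s₂)`, `(s₂,t₂)`
followed by a simple `t₂`–`t₂'` subpath using only arcs of the `𝕏`-variable
gadgets, which for each `i` traverses exactly one of the two internally
node-disjoint paths of the gadget of `x_i`; therefore `X` uniquely determines
a 0-1 assignment `x` of `𝕏` (`x_i := 1` if the lower path is used, `x_i := 0`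
if the upper path is used). -/
theorem stmt12 (n m : ℕ) (hn : 0 < n) (hm : 0 < m)
    (F : Fin m → List (Fin (3 * n) × Bool)) (h3 : ∀ j, (F j).length = 3) :
    ∀ X ∈ Phi (arcsRob n m F) (Node.s1 : Node (3 * n) m) (t2' n m),
      ∑ e ∈ X, Cfs n m e = 0 →
      ∃! x : Fin n → Bool,
        (↑X : Set (Node (3 * n) m × Node (3 * n) m)) =
          {((Node.s1 : Node (3 * n) m), Node.t1), (Node.t1, s2), (s2, t2m n m)} ∪
          ⋃ i : Fin n, (if x i then lowerArcs (xIdx3 n i) else upperArcs (xIdx3 n i)) := by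
  intro X hX hsum
  obtain ⟨p, ⟨hchainA, hhead, hlast, hnodup⟩, rfl⟩ := hX
  have hzero : ∀ e ∈ pathArcs p, Cfs n m e = 0 :=
    (Finset.sum_eq_zero_iff_of_nonneg (fun e _ => Cfs_nonneg e)).1 hsum
  have hZR : p.Chain' (ZR n m) :=
    chain'_of_zip fun u v huv => ZR_of_Cfs_eq_zero (hzero _ (List.mem_toFinset.2 huv))
  -- peel off the first three nodes
  cases p with
  | nil => simp at hhead
  | cons u r1 =>
    simp only [List.head?_cons, Option.some.injEq] at hhead
    subst hhead
    cases r1 with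
    | nil => simp [t2'] at hlast
    | cons v1 r2 =>
      rw [List.Chain', List.isChain_cons_cons] at hZR
      obtain ⟨h1, hZR⟩ := hZR
      obtain rfl := step_s1 hm h1
      rw [List.getLast?_cons_cons] at hlast
      cases r2 with
      | nil => simp [t2'] at hlast
      | cons v2 r3 =>
        rw [List.isChain_cons_cons] at hZR
        obtain ⟨h2, hZR⟩ := hZR
        obtain rfl := step_t1 hm h2
        rw [List.getLast?_cons_cons] at hlast
        cases r3 with
        | nil =>
          simp only [List.getLast?_singleton, Option.some.injEq, s2, t2',
            Node.junction.injEq, Fin.ext_iff, Fin.val_last] at hlast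
          simp at hlast
          omega
        | cons v3 r4 =>
          rw [List.isChain_cons_cons] at hZR
          obtain ⟨h3', hZR⟩ := hZR
          rw [List.getLast?_cons_cons] at hlast
          have h3'' : ZR n m (Node.junction (0 : Fin (3 * n + 1))) v3 := h3'
          rcases step_junction hm h3'' with ⟨_, rfl⟩ | ⟨i, b, hval, _⟩
          · -- v3 = t2m
            have hhead4 : (t2m n m :: r4).head? =
                some (Node.junction (⟨2 * n + 0, by omega⟩ : Fin (3 * n + 1))) := by
              simp only [List.head?_cons, Option.some.injEq, t2m]
              congr 1
            obtain ⟨x, hx⟩ :=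
              walk_junction hn hm n 0 (by omega) (by omega) (t2m n m :: r4) hZR hhead4 hlast
            have hmain : (↑(pathArcs (Node.s1 :: Node.t1 :: s2 :: t2m n m :: r4)) :
                Set (Node (3 * n) m × Node (3 * n) m)) = RHSset n m x := by
              rw [pathArcs_cons, pathArcs_cons, pathArcs_cons, Finset.coe_insert,
                Finset.coe_insert, Finset.coe_insert, hx]
              have h1' : (⋃ i : Fin n, {e | 0 ≤ i.val ∧ e ∈ gA (xIdx3 n i) (x i)}) =
                  (⋃ i : Fin n,
                    (if x i then lowerArcs (xIdx3 n i) else upperArcs (xIdx3 n i)) :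
                    Set (Node (3 * n) m × Node (3 * n) m)) := by
                apply Set.iUnion_congr
                intro i
                ext e
                simp only [Set.mem_setOf_eq, Nat.zero_le, true_and, gA_def]
              rw [h1']
              ext e
              simp only [RHSset, Set.mem_insert_iff, Set.mem_union, Set.mem_singleton_iff]
              tauto
            refine ⟨x, hmain, fun y hy => RHS_inj hn hm ?_⟩
            have hy' : (↑(pathArcs (Node.s1 :: Node.t1 :: s2 :: t2m n m :: r4)) :
                Set (Node (3 * n) m × Node (3 * n) m)) = RHSset n m y := hy
            rw [← hy', hmain]
          · -- junction 0 cannot start a gadget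
            simp only [Fin.val_zero] at hval
            omega

end RRSP
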